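/- For all m ≥ 1 and v ≥ 1, every box p in the local polytope L∞ of the (2,m,v) scenario admits a decomposition in which Bob's responses are deterministic functions of the shared variable: there exist a nonnegative weight w : (Fin m → Fin v) → ℝ with ∑_g w g = 1 and nonnegative response functions f : (Fin m → Fin v) → Fin m → Fin v → ℝ with ∑_a f g x a = 1 for all g, x, such that p x y a b = ∑_{g : Fin m → Fin v} w g * f g x a * (if b = g y then 1 else 0) for all x, y, a, b. In particular, shared randomness of dimension v^m suffices to span the local polytope (|λ*| ≤ v^{m(n−1)} for n = 2). -/

import Mathlib

open Matrix Kronecker ComplexOrder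

/-- A (2,m,v) box: a family of conditional probability distributions. -/
def IsBox (m v : ℕ) (p : Fin m → Fin m → Fin v → Fin v → ℝ) : Prop :=
  (∀ x y a b, 0 ≤ p x y a b) ∧ ∀ x y, ∑ a, ∑ b, p x y a b = 1

/-- A product box: `p x y a b = f x a * g y b` for local response functions `f`, `g`. -/
def IsProductBox (m v : ℕ) (p : Fin m → Fin m → Fin v → Fin v → ℝ) : Prop :=
  ∃ f g : Fin m → Fin v → ℝ,
    (∀ x a, 0 ≤ f x a) ∧ (∀ y b, 0 ≤ g y b) ∧
    (∀ x, ∑ a, f x a = 1) ∧ (∀ y, ∑ b, g y b = 1) ∧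
    ∀ x y a b, p x y a b = f x a * g y b

/-- Membership in `Q_d`: the box is realizable by a shared quantum state of local
dimension `d` together with local POVMs. -/
def IsQuantumBox (d m v : ℕ) (p : Fin m → Fin m → Fin v → Fin v → ℝ) : Prop :=
  ∃ (ρ : Matrix ((Fin d) × (Fin d)) ((Fin d) × (Fin d)) ℂ)
    (A B : Fin m → Fin v → Matrix (Fin d) (Fin d) ℂ),
    ρ.PosSemidef ∧ ρ.trace = 1 ∧
    (∀ x a, (A x a).PosSemidef) ∧ (∀ x, ∑ a, A x a = 1) ∧
    (∀ y b, (B y b).PosSemidef) ∧ (∀ y, ∑ b, B y b = 1) ∧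
    ∀ x y a b, (ρ * (A x a ⊗ₖ B y b)).trace = (p x y a b : ℂ)

/-- Membership in `L_N`: the box is realizable using shared classical randomness
of dimension `N`. -/
def IsLocalBox (N m v : ℕ) (p : Fin m → Fin m → Fin v → Fin v → ℝ) : Prop :=
  ∃ (w : Fin N → ℝ) (f g : Fin N → Fin m → Fin v → ℝ),
    (∀ l, 0 ≤ w l) ∧ (∑ l, w l = 1) ∧
    (∀ l x a, 0 ≤ f l x a) ∧ (∀ l y b, 0 ≤ g l y b) ∧
    (∀ l x, ∑ a, f l x a = 1) ∧ (∀ l y, ∑ b, g l y b = 1) ∧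
    ∀ x y a b, p x y a b = ∑ l, w l * f l x a * g l y b


open Finset

section Aux

variable {m v : ℕ}

/-- Sum over all functions of a product of per-coordinate values equals product of sums. -/
lemma aux_sum_prod (G : Fin m → Fin v → ℝ) (hG1 : ∀ y, ∑ b, G y b = 1) :
    ∑ g : Fin m → Fin v, ∏ y, G y (g y) = 1 := by
  have h := Fintype.prod_sum (R := ℝ) G
  rw [← h]
  simp [hG1]

/-- Restricted sum over functions with a prescribed value. -/
lemma aux_sum_prod_restrict (G : Fin m → Fin v → ℝ) (hG1 : ∀ y, ∑ b, G y b = 1)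
    (y : Fin m) (b : Fin v) :
    ∑ g : Fin m → Fin v, (∏ y', G y' (g y')) * (if b = g y then 1 else 0) = G y b := by
  set H : Fin m → Fin v → ℝ :=
    fun y' b' => if y' = y then (if b' = b then G y' b' else 0) else G y' b' with hH
  have key : ∀ g : Fin m → Fin v,
      (∏ y', G y' (g y')) * (if b = g y then 1 else 0)
        = ∏ y', H y' (g y') := by
    intro g
    by_cases h : b = g y
    · subst h
      rw [if_pos rfl, mul_one]
      refine Finset.prod_congr rfl fun y' _ => ?_
      by_cases hy : y' = y
      · subst hy; simp [hH]
      · simp [hH, hy]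
    · rw [if_neg h, mul_zero]
      symm
      apply Finset.prod_eq_zero (Finset.mem_univ y)
      simp [hH, Ne.symm h]
  have h2 := Fintype.prod_sum (R := ℝ) H
  have h3 : ∏ y' : Fin m, ∑ b', H y' b' = ∑ b', H y b' :=
    Finset.prod_eq_single y (fun y' _ hy' => by simp [hH, hy', hG1 y'])
      (by simp)
  rw [Finset.sum_congr rfl fun g _ => key g, ← h2, h3]
  simp [hH]

end Aux

/-- every box in the local polytope admits a decomposition in which
Bob's responses depend deterministically on the shared variable, which ranges over
the `v^m` functions `Fin m → Fin v`. -/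
theorem local_polytope_deterministic_Bob (m v : ℕ) (hm : 1 ≤ m) (hv : 1 ≤ v)
    (p : Fin m → Fin m → Fin v → Fin v → ℝ)
    (hp : p ∈ convexHull ℝ
      {r : Fin m → Fin m → Fin v → Fin v → ℝ | IsProductBox m v r}) :
    ∃ (w : (Fin m → Fin v) → ℝ) (f : (Fin m → Fin v) → Fin m → Fin v → ℝ),
      (∀ g, 0 ≤ w g) ∧ (∑ g : Fin m → Fin v, w g = 1) ∧
      (∀ g x a, 0 ≤ f g x a) ∧ (∀ g x, ∑ a, f g x a = 1) ∧
      ∀ x y a b, p x y a b =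
        ∑ g : Fin m → Fin v, w g * f g x a * (if b = g y then 1 else 0) := by
  rw [_root_.convexHull_eq] at hp
  obtain ⟨ι, t, c, z, hc0, hc1, hz, hcm⟩ := hp
  have hz' : ∀ i : {x // x ∈ t}, IsProductBox m v (z i) := fun i => hz i i.2
  choose F G hF0 hG0 hF1 hG1 hFG using hz'
  -- p as a sum over t.attach
  have hps : ∀ x y a b, p x y a b
      = ∑ i ∈ t.attach, (c i : ℝ) * F i x a * G i y b := by
    intro x y a b
    have := Finset.centerMass_eq_of_sum_1 t z hc1
    rw [hcm] at this
    calc p x y a b = (∑ i ∈ t, c i • z i) x y a b := by rw [← this]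
      _ = ∑ i ∈ t, c i * z i x y a b := by
          simp only [Finset.sum_apply, Pi.smul_apply, smul_eq_mul]
      _ = ∑ i ∈ t.attach, c (i : ι) * z (i : ι) x y a b :=
          (Finset.sum_attach t fun i => c i * z i x y a b).symm
      _ = ∑ i ∈ t.attach, c i * F i x a * G i y b := by
          refine Finset.sum_congr rfl fun i _ => ?_
          rw [hFG i x y a b, mul_assoc]
  have hc0' : ∀ i : {x // x ∈ t}, 0 ≤ c i := fun i => hc0 i i.2
  -- weights
  set W : (Fin m → Fin v) → ℝ :=
    fun g => ∑ i ∈ t.attach, c i * ∏ y, G i y (g y) with hW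
  set N : (Fin m → Fin v) → Fin m → Fin v → ℝ :=
    fun g x a => ∑ i ∈ t.attach, c i * F i x a * ∏ y, G i y (g y) with hN
  have hW0 : ∀ g, 0 ≤ W g := fun g =>
    Finset.sum_nonneg fun i _ => mul_nonneg (hc0' i)
      (Finset.prod_nonneg fun y _ => hG0 i y (g y))
  have hN0 : ∀ g x a, 0 ≤ N g x a := fun g x a =>
    Finset.sum_nonneg fun i _ => mul_nonneg (mul_nonneg (hc0' i) (hF0 i x a))
      (Finset.prod_nonneg fun y _ => hG0 i y (g y))
  -- when W g = 0, N g x a = 0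
  have hNzero : ∀ g x a, W g = 0 → N g x a = 0 := by
    intro g x a hWg
    have hterm : ∀ i ∈ t.attach, c i * ∏ y, G i y (g y) = 0 := by
      intro i hi
      have := (Finset.sum_eq_zero_iff_of_nonneg (fun i _ =>
        mul_nonneg (hc0' i) (Finset.prod_nonneg fun y _ => hG0 i y (g y)))).mp hWg
      exact this i hi
    refine Finset.sum_eq_zero fun i hi => ?_
    have : c i * F i x a * ∏ y, G i y (g y)
        = F i x a * (c i * ∏ y, G i y (g y)) := by ring
    rw [this, hterm i hi, mul_zero]
  set f : (Fin m → Fin v) → Fin m → Fin v → ℝ :=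
    fun g x a => if W g = 0 then (if a = ⟨0, hv⟩ then 1 else 0) else N g x a / W g with hf
  have hmul : ∀ g x a, W g * f g x a = N g x a := by
    intro g x a
    by_cases h : W g = 0
    · rw [h, zero_mul, hNzero g x a h]
    · rw [hf]; simp only [if_neg h]
      field_simp
  refine ⟨W, f, hW0, ?_, ?_, ?_, ?_⟩
  · -- total weight 1
    simp only [hW]
    rw [Finset.sum_comm]
    have step : ∀ i ∈ t.attach, ∑ g : Fin m → Fin v, c (i : ι) * ∏ y, G i y (g y) = c (i : ι) := by
      intro i _
      rw [← Finset.mul_sum, aux_sum_prod (G i) (hG1 i), mul_one]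
    rw [Finset.sum_congr rfl step, Finset.sum_attach t c]
    exact hc1
  · -- nonneg f
    intro g x a
    rw [hf]
    by_cases h : W g = 0
    · simp only [if_pos h]; positivity
    · simp only [if_neg h]
      exact div_nonneg (hN0 g x a) (hW0 g)
  · -- sum f = 1
    intro g x
    by_cases h : W g = 0
    · simp [hf, h]
    · simp only [hf, if_neg h]
      rw [← Finset.sum_div, div_eq_one_iff_eq h]
      simp only [hN, hW]
      rw [Finset.sum_comm]
      refine Finset.sum_congr rfl fun i _ => ?_
      calc ∑ a, c (i : ι) * F i x a * ∏ y, G i y (g y)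
          = (∑ a, F i x a) * (c (i : ι) * ∏ y, G i y (g y)) := by
            rw [Finset.sum_mul]
            exact Finset.sum_congr rfl fun a _ => by ring
        _ = c (i : ι) * ∏ y, G i y (g y) := by rw [hF1 i x, one_mul]
  · -- main identity
    intro x y a b
    rw [hps x y a b]
    have : ∀ g : Fin m → Fin v, W g * f g x a * (if b = g y then 1 else 0)
        = N g x a * (if b = g y then 1 else 0) := fun g => by rw [hmul g x a]
    rw [Finset.sum_congr rfl fun g _ => this g]
    simp only [hN, Finset.sum_mul]
    rw [Finset.sum_comm]
    refine Finset.sum_congr rfl fun i _ => ?_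
    symm
    calc ∑ g : Fin m → Fin v, c i * F i x a * (∏ y', G i y' (g y')) * (if b = g y then 1 else 0)
        = c i * F i x a * ∑ g : Fin m → Fin v, (∏ y', G i y' (g y')) * (if b = g y then 1 else 0) := by
          rw [Finset.mul_sum]; refine Finset.sum_congr rfl fun g _ => ?_; ring
      _ = c i * F i x a * G i y b := by rw [aux_sum_prod_restrict (G i) (hG1 i) y b]
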